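/- Let k be an algebraically closed field of characteristic 2, and consider R_2 = k[X_1,X_2,T]/(T^2 + X_1 X_2 T + X_1^2 P_2(X_2) + X_2^2 P_1(X_1)) where P_i(X_i) = X_i·U_i(X_i) with U_i(0) ≠ 0 (U_i ∈ k[X_i]). Then the formal completion of R_2 at the maximal ideal (X_1,X_2,T) is isomorphic to k⟦X,Y,T⟧/(T^2 + XYT + X^2 Y + X Y^2), a rational double point of type D_4^1. -/

import Mathlib

open MvPolynomial

namespace Stmt14

noncomputable section

variable {k : Type*} [Field k]

/-- constant exponent vector -/
def Nj (j : ℕ) : Fin 3 →₀ ℕ := Finsupp.equivFunOnFinite.symm (fun _ => j)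

@[simp] lemma Nj_apply (j : ℕ) (i : Fin 3) : Nj j i = j := rfl

/-- total degree of an exponent -/
def sdeg (d : Fin 3 →₀ ℕ) : ℕ := ∑ i, d i

lemma apply_le_sdeg (d : Fin 3 →₀ ℕ) (i : Fin 3) : d i ≤ sdeg d :=
  Finset.single_le_sum (f := fun i => d i) (fun _ _ => Nat.zero_le _) (Finset.mem_univ i)

lemma sdeg_add (d e : Fin 3 →₀ ℕ) : sdeg (d + e) = sdeg d + sdeg e := by
  simp [sdeg, Finset.sum_add_distrib]

lemma lt_Nj_of_sdeg_lt {d : Fin 3 →₀ ℕ} {j : ℕ} (h : sdeg d < j) : d < Nj j := by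
  constructor
  · intro i
    exact le_of_lt (lt_of_le_of_lt (apply_le_sdeg d i) h)
  · intro hle
    have := hle 0
    simp only [Nj_apply] at this
    exact absurd (lt_of_le_of_lt (apply_le_sdeg d 0) h) (not_lt.2 this)

lemma sdeg_ge_of_not_lt_Nj {d : Fin 3 →₀ ℕ} {j : ℕ} (h : ¬ d < Nj j) : j ≤ sdeg d := by
  by_contra hc
  exact h (lt_Nj_of_sdeg_lt (not_le.1 hc))

lemma Nj_mono {j j' : ℕ} (h : j ≤ j') : Nj j ≤ Nj j' := by
  intro i; simpa using h

section Ev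

variable {C : Type*} [CommRing C] [Algebra k C]

lemma prodpow_mem (a : Fin 3 → C) (𝔪 : Ideal C) (ha : ∀ i, a i ∈ 𝔪) (d : Fin 3 →₀ ℕ) :
    (∏ i, a i ^ d i) ∈ 𝔪 ^ (sdeg d) := by
  have h : sdeg d = d 0 + d 1 + d 2 := by simp [sdeg, Fin.sum_univ_three]
  rw [h, Fin.prod_univ_three, pow_add, pow_add]
  exact Ideal.mul_mem_mul (Ideal.mul_mem_mul (Ideal.pow_mem_pow (ha 0) _)
    (Ideal.pow_mem_pow (ha 1) _)) (Ideal.pow_mem_pow (ha 2) _)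

lemma prodpow_eq_zero (a : Fin 3 → C) {j : ℕ} {𝔪 : Ideal C} (ha : ∀ i, a i ∈ 𝔪)
    (hj : 𝔪 ^ j = ⊥) (d : Fin 3 →₀ ℕ) (hd : j ≤ sdeg d) :
    (∏ i, a i ^ d i) = 0 := by
  have h1 : (∏ i, a i ^ d i) ∈ 𝔪 ^ j :=
    Ideal.pow_le_pow_right hd (prodpow_mem a 𝔪 ha d)
  rw [hj] at h1
  simpa using h1

lemma aeval_eq_zero_of_support (a : Fin 3 → C) {j : ℕ} {𝔪 : Ideal C} (ha : ∀ i, a i ∈ 𝔪)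
    (hj : 𝔪 ^ j = ⊥) (p : MvPolynomial (Fin 3) k)
    (hp : ∀ d ∈ p.support, j ≤ sdeg d) : aeval a p = 0 := by
  rw [MvPolynomial.as_sum p, map_sum]
  refine Finset.sum_eq_zero (fun d hd => ?_)
  rw [MvPolynomial.aeval_monomial]
  have h2 : (Finsupp.prod d fun i k => a i ^ k) = ∏ i, a i ^ d i := Finsupp.prod_pow d a
  rw [h2, prodpow_eq_zero a ha hj d (hp d hd), mul_zero]

/-- the truncated evaluation -/
def ev (a : Fin 3 → C) (j : ℕ) (F : MvPowerSeries (Fin 3) k) : C :=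
  aeval a (MvPowerSeries.trunc k (Nj j) F)

lemma eq_of_pow_zero_eq_bot {𝔪 : Ideal C} (hj : 𝔪 ^ 0 = ⊥) (x y : C) : x = y := by
  have h1 : x - y ∈ 𝔪 ^ 0 := by
    rw [pow_zero, Ideal.one_eq_top]; exact Submodule.mem_top
  rw [hj] at h1
  exact sub_eq_zero.1 (Ideal.mem_bot.1 h1)

lemma ev_mul (a : Fin 3 → C) {j : ℕ} {𝔪 : Ideal C} (ha : ∀ i, a i ∈ 𝔪)
    (hj : 𝔪 ^ j = ⊥) (F G : MvPowerSeries (Fin 3) k) :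
    ev a j (F * G) = ev a j F * ev a j G := by
  have key : aeval (R := k) a ((MvPowerSeries.trunc k (Nj j) (F * G) : MvPolynomial (Fin 3) k)
      - MvPowerSeries.trunc k (Nj j) F * MvPowerSeries.trunc k (Nj j) G) = 0 := by
    apply aeval_eq_zero_of_support a ha hj
    intro d hd
    by_contra hc
    have hsd : sdeg d < j := not_le.1 hc
    have hdlt : d < Nj j := lt_Nj_of_sdeg_lt hsd
    apply MvPolynomial.mem_support_iff.1 hd
    rw [MvPolynomial.coeff_sub, MvPolynomial.coeff_mul]
    rw [MvPowerSeries.coeff_trunc]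
    rw [if_pos hdlt, MvPowerSeries.coeff_mul]
    rw [sub_eq_zero]
    apply Finset.sum_congr rfl
    intro p hp
    have hsum : p.1 + p.2 = d := Finset.HasAntidiagonal.mem_antidiagonal.1 hp
    have h1 : p.1 < Nj j := lt_of_le_of_lt (hsum ▸ le_self_add) hdlt
    have h2 : p.2 < Nj j := lt_of_le_of_lt (hsum ▸ le_add_self) hdlt
    rw [MvPowerSeries.coeff_trunc, MvPowerSeries.coeff_trunc, if_pos h1, if_pos h2]
  rw [map_sub, sub_eq_zero] at key
  unfold ev
  rw [key, map_mul]

lemma ev_add (a : Fin 3 → C) (j : ℕ) (F G : MvPowerSeries (Fin 3) k) :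
    ev a j (F + G) = ev a j F + ev a j G := by
  unfold ev
  rw [map_add, map_add]

lemma ev_one (a : Fin 3 → C) {j : ℕ} {𝔪 : Ideal C} (ha : ∀ i, a i ∈ 𝔪)
    (hj : 𝔪 ^ j = ⊥) : ev a j (1 : MvPowerSeries (Fin 3) k) = 1 := by
  rcases Nat.eq_zero_or_pos j with h0 | hpos
  · exact eq_of_pow_zero_eq_bot (h0 ▸ hj) _ _
  · unfold ev
    rw [MvPowerSeries.trunc_one _ (by
      intro hN
      have := DFunLike.congr_fun hN (0 : Fin 3)
      simp only [Nj_apply, Finsupp.coe_zero, Pi.zero_apply] at this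
      omega), map_one]

/-- bundled ring hom -/
def evHom (a : Fin 3 → C) (j : ℕ) {𝔪 : Ideal C} (ha : ∀ i, a i ∈ 𝔪)
    (hj : 𝔪 ^ j = ⊥) : MvPowerSeries (Fin 3) k →+* C where
  toFun := ev a j
  map_one' := ev_one a ha hj
  map_mul' := ev_mul a ha hj
  map_zero' := by show ev a j 0 = 0; unfold ev; rw [map_zero, map_zero]
  map_add' := ev_add a j

@[simp] lemma evHom_apply (a : Fin 3 → C) (j : ℕ) {𝔪 : Ideal C} (ha : ∀ i, a i ∈ 𝔪)
    (hj : 𝔪 ^ j = ⊥) (F : MvPowerSeries (Fin 3) k) :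
    evHom a j ha hj F = aeval a (MvPowerSeries.trunc k (Nj j) F) := rfl

end Ev

section S2
variable {C D : Type*} [CommRing C] [Algebra k C] [CommRing D] [Algebra k D]

example : True := trivial

-- commutation of a ring hom with aeval
lemma ringHom_aeval (φ : C →+* D) (hφ : ∀ c : k, φ (algebraMap k C c) = algebraMap k D c)
    (a : Fin 3 → C) (p : MvPolynomial (Fin 3) k) :
    φ (aeval a p) = aeval (fun i => φ (a i)) p := by
  rw [MvPolynomial.aeval_def, MvPolynomial.aeval_def, MvPolynomial.eval₂_comp_left φ]
  congr 1
  exact RingHom.ext hφ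

lemma ringHom_polyAeval (φ : C →+* D) (hφ : ∀ c : k, φ (algebraMap k C c) = algebraMap k D c)
    (x : C) (U : Polynomial k) :
    φ (Polynomial.aeval x U) = Polynomial.aeval (φ x) U := by
  rw [Polynomial.aeval_def, Polynomial.aeval_def, Polynomial.hom_eval₂]
  congr 1
  exact RingHom.ext hφ
end S2
section S3
variable {C D : Type*} [CommRing C] [Algebra k C] [CommRing D] [Algebra k D]

lemma aeval_trunc_down (b : Fin 3 → D) {j₂ j : ℕ} {𝔫 : Ideal D} (hb : ∀ i, b i ∈ 𝔫)
    (hj₂ : 𝔫 ^ j₂ = ⊥) (hle : j₂ ≤ j) (F : MvPowerSeries (Fin 3) k) :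
    aeval b ((MvPowerSeries.trunc k (Nj j) F : MvPolynomial (Fin 3) k)) =
      aeval b ((MvPowerSeries.trunc k (Nj j₂) F : MvPolynomial (Fin 3) k)) := by
  have key : aeval (R := k) b ((MvPowerSeries.trunc k (Nj j) F : MvPolynomial (Fin 3) k)
      - MvPowerSeries.trunc k (Nj j₂) F) = 0 := by
    apply aeval_eq_zero_of_support b hb hj₂
    intro d hd
    by_contra hc
    have hsd : sdeg d < j₂ := not_le.1 hc
    have h2 : d < Nj j₂ := lt_Nj_of_sdeg_lt hsd
    have h1 : d < Nj j := lt_of_lt_of_le h2 (Nj_mono hle)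
    apply MvPolynomial.mem_support_iff.1 hd
    rw [MvPolynomial.coeff_sub, MvPowerSeries.coeff_trunc, MvPowerSeries.coeff_trunc,
      if_pos h1, if_pos h2, sub_self]
  rw [map_sub, sub_eq_zero] at key
  exact key

/-- functoriality of ev along ring homs, allowing decrease of precision level -/
lemma ev_comp (φ : C →+* D) (hφ : ∀ c : k, φ (algebraMap k C c) = algebraMap k D c)
    (a : Fin 3 → C) {j₂ j : ℕ} {𝔫 : Ideal D} (hb : ∀ i, φ (a i) ∈ 𝔫)
    (hj₂ : 𝔫 ^ j₂ = ⊥) (hle : j₂ ≤ j) (F : MvPowerSeries (Fin 3) k) :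
    φ (ev a j F) = ev (fun i => φ (a i)) j₂ F := by
  unfold ev
  rw [ringHom_aeval φ hφ]
  exact aeval_trunc_down _ hb hj₂ hle F

lemma single_lt_Nj (i : Fin 3) {j : ℕ} (hj : 1 ≤ j) : Finsupp.single i 1 < Nj j := by
  constructor
  · intro i'
    rcases eq_or_ne i' i with h | h
    · subst h; simpa [Finsupp.single_apply] using hj
    · simp [Finsupp.single_apply, Ne.symm h]
  · intro hle
    set i' : Fin 3 := if i = 0 then 1 else 0 with hi'
    have hne : i' ≠ i := by
      rcases eq_or_ne i 0 with h | h <;> simp [hi', h] <;> omega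
    have := hle i'
    simp [Finsupp.single_apply, hne, Ne.symm hne] at this
    omega

lemma ev_X (a : Fin 3 → C) {j : ℕ} {𝔪 : Ideal C} (ha : ∀ i, a i ∈ 𝔪)
    (hj : 𝔪 ^ j = ⊥) (i : Fin 3) :
    ev a j ((MvPowerSeries.X i : MvPowerSeries (Fin 3) k)) = a i := by
  rcases Nat.eq_zero_or_pos j with h0 | hpos
  · exact eq_of_pow_zero_eq_bot (h0 ▸ hj) _ _
  · unfold ev
    have htr : (MvPowerSeries.trunc k (Nj j) (MvPowerSeries.X i) : MvPolynomial (Fin 3) k)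
        = MvPolynomial.X i := by
      apply MvPolynomial.ext
      intro d
      rw [MvPowerSeries.coeff_trunc]
      classical
      rw [MvPowerSeries.coeff_X, MvPolynomial.coeff_X']
      split_ifs with h1 h2 h3 h4 h5
      · rfl
      · exact absurd h2.symm h3
      · exact absurd h4.symm h2
      · rfl
      · exact absurd (h5 ▸ single_lt_Nj i hpos) h1
      · rfl
    rw [htr, MvPolynomial.aeval_X]

lemma ev_algebraMap (a : Fin 3 → C) {j : ℕ} {𝔪 : Ideal C} (ha : ∀ i, a i ∈ 𝔪)
    (hj : 𝔪 ^ j = ⊥) (c : k) :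
    ev a j (algebraMap k (MvPowerSeries (Fin 3) k) c) = algebraMap k C c := by
  rcases Nat.eq_zero_or_pos j with h0 | hpos
  · exact eq_of_pow_zero_eq_bot (h0 ▸ hj) _ _
  · unfold ev
    have hNne : Nj j ≠ 0 := by
      intro hN
      have := DFunLike.congr_fun hN (0 : Fin 3)
      simp only [Nj_apply, Finsupp.coe_zero, Pi.zero_apply] at this
      omega
    have halg : algebraMap k (MvPowerSeries (Fin 3) k) c = MvPowerSeries.C (σ := Fin 3) c := rfl
    rw [halg, MvPowerSeries.trunc_C _ hNne]
    simp

/-- ev kills series of order ≥ j -/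
lemma ev_eq_zero_of_order (a : Fin 3 → C) {j : ℕ} {𝔪 : Ideal C} (ha : ∀ i, a i ∈ 𝔪)
    (hj : 𝔪 ^ j = ⊥) (F : MvPowerSeries (Fin 3) k)
    (hF : ∀ d, sdeg d < j → MvPowerSeries.coeff d F = 0) : ev a j F = 0 := by
  unfold ev
  apply aeval_eq_zero_of_support a ha hj
  intro d hd
  by_contra hc
  apply MvPolynomial.mem_support_iff.1 hd
  have hsd : sdeg d < j := not_le.1 hc
  rw [MvPowerSeries.coeff_trunc, if_pos (lt_Nj_of_sdeg_lt hsd), hF d hsd]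

end S3

section S4
variable {C : Type*} [CommRing C] [Algebra k C]

lemma coe_hom_eq_aeval (ψ : MvPowerSeries (Fin 3) k →+* C)
    (hψ : ∀ c : k, ψ (algebraMap k (MvPowerSeries (Fin 3) k) c) = algebraMap k C c)
    (p : MvPolynomial (Fin 3) k) :
    ψ (p : MvPowerSeries (Fin 3) k) = aeval (fun i => ψ (MvPowerSeries.X i)) p := by
  have h : ψ.comp (MvPolynomial.coeToMvPowerSeries.ringHom)
      = (aeval (R := k) (fun i => ψ (MvPowerSeries.X i))).toRingHom := by
    apply MvPolynomial.ringHom_ext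
    · intro r
      simp only [RingHom.coe_comp, Function.comp_apply,
        MvPolynomial.coeToMvPowerSeries.ringHom_apply, MvPolynomial.coe_C,
        AlgHom.toRingHom_eq_coe, RingHom.coe_coe, MvPolynomial.aeval_C]
      exact hψ r
    · intro i
      simp only [RingHom.coe_comp, Function.comp_apply,
        MvPolynomial.coeToMvPowerSeries.ringHom_apply, MvPolynomial.coe_X,
        AlgHom.toRingHom_eq_coe, RingHom.coe_coe, MvPolynomial.aeval_X]
  have := DFunLike.congr_fun h p
  simpa using this

/-- a power-series ring hom that kills high order terms is given by truncated evaluation -/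
lemma hom_eq_ev (ψ : MvPowerSeries (Fin 3) k →+* C)
    (hψ : ∀ c : k, ψ (algebraMap k (MvPowerSeries (Fin 3) k) c) = algebraMap k C c)
    (j : ℕ)
    (hkill : ∀ F : MvPowerSeries (Fin 3) k,
      (∀ d, sdeg d < j → MvPowerSeries.coeff d F = 0) → ψ F = 0)
    (F : MvPowerSeries (Fin 3) k) :
    ψ F = ev (fun i => ψ (MvPowerSeries.X i)) j F := by
  have htail : ψ (F - ((MvPowerSeries.trunc k (Nj j) F : MvPolynomial (Fin 3) k) :
      MvPowerSeries (Fin 3) k)) = 0 := by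
    apply hkill
    intro d hd
    rw [map_sub, MvPolynomial.coeff_coe, MvPowerSeries.coeff_trunc,
      if_pos (lt_Nj_of_sdeg_lt hd), sub_self]
  rw [map_sub, sub_eq_zero] at htail
  rw [htail, coe_hom_eq_aeval ψ hψ]
  rfl

lemma polyAeval_sub_mem (U : Polynomial k) (x y : C) :
    Polynomial.aeval x U - Polynomial.aeval y U ∈ Ideal.span {x - y} := by
  apply Ideal.mem_span_singleton.2
  rw [Polynomial.aeval_def, Polynomial.aeval_def, Polynomial.eval₂_eq_eval_map,
    Polynomial.eval₂_eq_eval_map]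
  exact Polynomial.sub_dvd_eval_sub x y _

lemma exists_fixedPoint (𝔐 : Ideal C) {j : ℕ} (hj : 𝔐 ^ j = ⊥) (z : C) (hz : z ∈ 𝔐)
    (U : Polynomial k) : ∃ ω : C, Polynomial.aeval (z * ω) U = ω := by
  set h : C → C := fun w => Polynomial.aeval (z * w) U with hdef
  have claim : ∀ r : ℕ, h^[r+1] 0 - h^[r] 0 ∈ 𝔐 ^ r := by
    intro r
    induction r with
    | zero => rw [pow_zero, Ideal.one_eq_top]; exact Submodule.mem_top
    | succ r ih =>
      have hle : Ideal.span {z * h^[r+1] 0 - z * h^[r] 0} ≤ 𝔐 ^ (r+1) := by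
        rw [Ideal.span_singleton_le_iff_mem, ← mul_sub, pow_succ']
        exact Ideal.mul_mem_mul hz ih
      have key : h (h^[r+1] 0) - h (h^[r] 0) ∈ 𝔐 ^ (r+1) :=
        hle (polyAeval_sub_mem U (z * h^[r+1] 0) (z * h^[r] 0))
      rw [Function.iterate_succ_apply' h (r+1)]
      nth_rewrite 2 [Function.iterate_succ_apply' h r]
      exact key
  refine ⟨h^[j] 0, ?_⟩
  have : h (h^[j] 0) - h^[j] 0 = 0 := by
    have hm := claim j
    rw [hj] at hm
    have := Ideal.mem_bot.1 hm
    rw [Function.iterate_succ_apply' h j] at this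
    exact this
  have := sub_eq_zero.1 this
  exact this

end S4
section S5

/-- the exponents of the four monomials of `g = T² + XYT + X²Y + XY²` -/
def e1 : Fin 3 →₀ ℕ := Finsupp.single 2 2
def e2 : Fin 3 →₀ ℕ := Finsupp.single 0 1 + Finsupp.single 1 1 + Finsupp.single 2 1
def e3 : Fin 3 →₀ ℕ := Finsupp.single 0 2 + Finsupp.single 1 1
def e4 : Fin 3 →₀ ℕ := Finsupp.single 0 1 + Finsupp.single 1 2

/-- weight function making T² the unique lowest monomial of g -/
def wt (d : Fin 3 →₀ ℕ) : ℕ := 3 * d 0 + 3 * d 1 + 4 * d 2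

lemma wt_add (d e : Fin 3 →₀ ℕ) : wt (d + e) = wt d + wt e := by
  simp [wt]; ring

lemma wt_mono {d e : Fin 3 →₀ ℕ} (h : d ≤ e) : wt d ≤ wt e := by
  have h0 := h 0; have h1 := h 1; have h2 := h 2
  simp only [wt]; omega

lemma sdeg_le_wt (d : Fin 3 →₀ ℕ) : 3 * sdeg d ≤ wt d := by
  simp only [wt, sdeg, Fin.sum_univ_three]; omega

@[simp] lemma wt_e1 : wt e1 = 8 := by simp [wt, e1, Finsupp.single_apply]
@[simp] lemma wt_e2 : wt e2 = 10 := by simp [wt, e2, Finsupp.single_apply]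
@[simp] lemma wt_e3 : wt e3 = 9 := by simp [wt, e3, Finsupp.single_apply]
@[simp] lemma wt_e4 : wt e4 = 9 := by simp [wt, e4, Finsupp.single_apply]

variable {k : Type*} [Field k]

/-- the standard `D₄` equation as a power series -/
def gps : MvPowerSeries (Fin 3) k :=
  (MvPowerSeries.X 2)^2 + MvPowerSeries.X 0 * MvPowerSeries.X 1 * MvPowerSeries.X 2
    + (MvPowerSeries.X 0)^2 * MvPowerSeries.X 1 + MvPowerSeries.X 0 * (MvPowerSeries.X 1)^2

lemma gps_eq : (gps : MvPowerSeries (Fin 3) k)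
    = MvPowerSeries.monomial e1 1 + MvPowerSeries.monomial e2 1
      + MvPowerSeries.monomial e3 1 + MvPowerSeries.monomial e4 1 := by
  rw [gps, e1, e2, e3, e4]
  rw [MvPowerSeries.X_pow_eq, MvPowerSeries.X_pow_eq, MvPowerSeries.X_pow_eq]
  simp only [MvPowerSeries.X_def, MvPowerSeries.monomial_mul_monomial, one_mul]

lemma coeff_gps_mul (u : MvPowerSeries (Fin 3) k) (d : Fin 3 →₀ ℕ) :
    MvPowerSeries.coeff d (gps * u)
      = (if e1 ≤ d then MvPowerSeries.coeff (d - e1) u else 0)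
      + (if e2 ≤ d then MvPowerSeries.coeff (d - e2) u else 0)
      + (if e3 ≤ d then MvPowerSeries.coeff (d - e3) u else 0)
      + (if e4 ≤ d then MvPowerSeries.coeff (d - e4) u else 0) := by
  rw [gps_eq, add_mul, add_mul, add_mul, map_add, map_add, map_add]
  rw [MvPowerSeries.coeff_monomial_mul, MvPowerSeries.coeff_monomial_mul,
    MvPowerSeries.coeff_monomial_mul, MvPowerSeries.coeff_monomial_mul]
  simp only [one_mul]

lemma krull_coeff {u : MvPowerSeries (Fin 3) k} {j : ℕ}
    (hgu : ∀ d, sdeg d < j → MvPowerSeries.coeff d (gps * u) = 0) :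
    ∀ d, wt d + 8 ≤ 3 * j → MvPowerSeries.coeff d u = 0 := by
  suffices H : ∀ n : ℕ, ∀ d, wt d = n → wt d + 8 ≤ 3 * j → MvPowerSeries.coeff d u = 0 by
    intro d hd; exact H (wt d) d rfl hd
  intro n
  induction n using Nat.strong_induction_on with
  | _ n IH =>
    intro d hdn hdj
    set D := d + e1 with hD
    have hsD : sdeg D < j := by
      have h1 := sdeg_le_wt d
      have h2 : sdeg D = sdeg d + 2 := by
        rw [hD, sdeg_add]
        have : sdeg e1 = 2 := by simp [sdeg, e1, Fin.sum_univ_three, Finsupp.single_apply]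
        omega
      omega
    have hzero := hgu D hsD
    rw [coeff_gps_mul] at hzero
    have he1 : e1 ≤ D := le_add_self
    rw [if_pos he1, hD, add_tsub_cancel_right] at hzero
    have hsmall : ∀ e : Fin 3 →₀ ℕ, 9 ≤ wt e →
        (if e ≤ D then MvPowerSeries.coeff (D - e) u else 0) = 0 := by
      intro e he
      split_ifs with hle
      · set d' := D - e with hd'
        have hsum : d' + e = D := tsub_add_cancel_of_le hle
        have hw : wt d' + wt e = wt D := by rw [← wt_add, hsum]
        rw [hD, wt_add, wt_e1] at hw
        have hlt : wt d' < n := by omega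
        exact IH (wt d') (by omega) d' rfl (by omega)
      · rfl
    rw [hsmall e2 (by simp), hsmall e3 (by simp), hsmall e4 (by simp)] at hzero
    simpa using hzero

lemma krull (F : MvPowerSeries (Fin 3) k)
    (h : ∀ j : ℕ, ∃ hh rr : MvPowerSeries (Fin 3) k, F = gps * hh + rr ∧
      (∀ d, sdeg d < j → MvPowerSeries.coeff d rr = 0)) :
    ∃ hh, F = gps * hh := by
  choose hs rs hF hr using h
  have hu : ∀ i : ℕ, ∀ d, wt d + 8 ≤ 3 * i → MvPowerSeries.coeff d (hs (i+1) - hs i) = 0 := by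
    intro i
    apply krull_coeff
    intro d hd
    have e : gps * (hs (i+1) - hs i) = rs i - rs (i+1) := by
      have h1 := hF i
      have h2 := hF (i+1)
      rw [mul_sub]
      have : gps * hs (i+1) = F - rs (i+1) := by rw [h2]; ring
      rw [this]
      have : gps * hs i = F - rs i := by rw [h1]; ring
      rw [this]
      ring
    rw [e, map_sub, hr i d hd, hr (i+1) d (by omega), sub_self]
  set hlim : MvPowerSeries (Fin 3) k := fun d => MvPowerSeries.coeff d (hs (wt d + 3)) with hlimdef
  have hstab : ∀ d : Fin 3 →₀ ℕ, ∀ i, wt d + 3 ≤ i →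
      MvPowerSeries.coeff d (hs i) = MvPowerSeries.coeff d hlim := by
    intro d
    intro i
    induction i with
    | zero => intro h0; omega
    | succ i ih =>
      intro hi
      rcases Nat.lt_or_ge (wt d + 3) (i+1) with hlt | hge
      · have hstep : MvPowerSeries.coeff d (hs (i+1)) = MvPowerSeries.coeff d (hs i) := by
          have := hu i d (by omega)
          rw [map_sub] at this
          exact sub_eq_zero.1 this
        rw [hstep]
        exact ih (by omega)
      · have : wt d + 3 = i + 1 := by omega
        rw [← this]
        rfl
  refine ⟨hlim, ?_⟩
  apply MvPowerSeries.ext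
  intro d
  set J := wt d + 3 with hJ
  have hsd : sdeg d < J := by have := sdeg_le_wt d; omega
  have h1 : MvPowerSeries.coeff d F = MvPowerSeries.coeff d (gps * hs J) := by
    rw [hF J, map_add, hr J d hsd, add_zero]
  rw [h1]
  rw [coeff_gps_mul, coeff_gps_mul]
  have hsame : ∀ e : Fin 3 →₀ ℕ,
      (if e ≤ d then MvPowerSeries.coeff (d - e) (hs J) else 0)
        = (if e ≤ d then MvPowerSeries.coeff (d - e) hlim else 0) := by
    intro e
    split_ifs with hle
    · exact hstab (d - e) J (by have := wt_mono (tsub_le_self (a := d) (b := e)); omega)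
    · rfl
  rw [hsame e1, hsame e2, hsame e3, hsame e4]

end S5
section S6
variable (k : Type*) [Field k] (U₁ U₂ : Polynomial k)

/-- the defining polynomial of R₂ -/
def fpoly : MvPolynomial (Fin 3) k :=
  (X 2)^2 + X 0 * X 1 * X 2
    + (X 0)^2 * (X 1 * Polynomial.aeval (X 1) U₂)
    + (X 1)^2 * (X 0 * Polynomial.aeval (X 0) U₁)

def Iid : Ideal (MvPolynomial (Fin 3) k) := Ideal.span {fpoly k U₁ U₂}

def Qr := MvPolynomial (Fin 3) k ⧸ Iid k U₁ U₂

instance : CommRing (Qr k U₁ U₂) := Ideal.Quotient.commRing _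
instance : Algebra k (Qr k U₁ U₂) := Ideal.Quotient.algebra k

def mkI : MvPolynomial (Fin 3) k →+* Qr k U₁ U₂ := Ideal.Quotient.mk _

def mid : Ideal (Qr k U₁ U₂) :=
  Ideal.span {mkI k U₁ U₂ (X 0), mkI k U₁ U₂ (X 1), mkI k U₁ U₂ (X 2)}

def Bq (j : ℕ) := Qr k U₁ U₂ ⧸ ((mid k U₁ U₂) ^ j • ⊤ : Ideal (Qr k U₁ U₂))

instance (j : ℕ) : CommRing (Bq k U₁ U₂ j) := Ideal.Quotient.commRing _
instance (j : ℕ) : Algebra k (Bq k U₁ U₂ j) := Ideal.Quotient.algebra k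

def mkB (j : ℕ) : Qr k U₁ U₂ →+* Bq k U₁ U₂ j := Ideal.Quotient.mk _

def xb (j : ℕ) (i : Fin 3) : Bq k U₁ U₂ j := mkB k U₁ U₂ j (mkI k U₁ U₂ (X i))

def mb (j : ℕ) : Ideal (Bq k U₁ U₂ j) := (mid k U₁ U₂).map (mkB k U₁ U₂ j)

lemma smul_top_eq (j : ℕ) :
    ((mid k U₁ U₂) ^ j • ⊤ : Ideal (Qr k U₁ U₂)) = (mid k U₁ U₂) ^ j := by
  ext x; simp

lemma xb_mem (j : ℕ) (i : Fin 3) : xb k U₁ U₂ j i ∈ mb k U₁ U₂ j := by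
  apply Ideal.mem_map_of_mem
  apply Ideal.subset_span
  fin_cases i <;> simp

lemma mb_pow (j : ℕ) : (mb k U₁ U₂ j) ^ j = ⊥ := by
  rw [mb, ← Ideal.map_pow]
  rw [Ideal.map_eq_bot_iff_le_ker]
  rw [mkB]
  intro x hx
  exact Ideal.Quotient.eq_zero_iff_mem.2 ((smul_top_eq k U₁ U₂ j).symm ▸ hx)

lemma algebraMap_Bq (j : ℕ) (c : k) :
    algebraMap k (Bq k U₁ U₂ j) c = mkB k U₁ U₂ j (mkI k U₁ U₂ (MvPolynomial.C c)) := by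
  rfl

/-- `U₁` evaluated at the first variable, in `Bq j` -/
def wB1 (j : ℕ) : Bq k U₁ U₂ j := Polynomial.aeval (xb k U₁ U₂ j 0) U₁
def wB2 (j : ℕ) : Bq k U₁ U₂ j := Polynomial.aeval (xb k U₁ U₂ j 1) U₂

lemma xb_nilpotent (j : ℕ) (i : Fin 3) : IsNilpotent (xb k U₁ U₂ j i) := by
  refine ⟨j, ?_⟩
  have h := Ideal.pow_mem_pow (xb_mem k U₁ U₂ j i) j
  rw [mb_pow] at h
  simpa using h

lemma isUnit_aeval_nilp {C : Type*} [CommRing C] [Algebra k C] (x : C)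
    (hx : IsNilpotent x) (U : Polynomial k) (hU : U.coeff 0 ≠ 0) :
    IsUnit (Polynomial.aeval x U) := by
  have hdec : Polynomial.aeval x U = x * Polynomial.aeval x U.divX
      + algebraMap k C (U.coeff 0) := by
    conv_lhs => rw [← Polynomial.X_mul_divX_add U]
    rw [map_add, map_mul, Polynomial.aeval_X, Polynomial.aeval_C]
  rw [hdec]
  have hnil : IsNilpotent (x * Polynomial.aeval x U.divX) :=
    (Commute.all _ _).isNilpotent_mul_right hx
  have hunit : IsUnit (algebraMap k C (U.coeff 0)) :=
    (IsUnit.mk0 _ hU).map (algebraMap k C)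
  exact hnil.isUnit_add_right_of_commute hunit (Commute.all _ _)

lemma isUnit_wB1 (hU₁ : U₁.coeff 0 ≠ 0) (j : ℕ) : IsUnit (wB1 k U₁ U₂ j) :=
  isUnit_aeval_nilp k _ (xb_nilpotent k U₁ U₂ j 0) U₁ hU₁

lemma isUnit_wB2 (hU₂ : U₂.coeff 0 ≠ 0) (j : ℕ) : IsUnit (wB2 k U₁ U₂ j) :=
  isUnit_aeval_nilp k _ (xb_nilpotent k U₁ U₂ j 1) U₂ hU₂

/-- inverse of `wB1` -/
def bB1 (hU₁ : U₁.coeff 0 ≠ 0) (j : ℕ) : Bq k U₁ U₂ j :=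
  ((isUnit_wB1 k U₁ U₂ hU₁ j).unit⁻¹ : (Bq k U₁ U₂ j)ˣ)
def bB2 (hU₂ : U₂.coeff 0 ≠ 0) (j : ℕ) : Bq k U₁ U₂ j :=
  ((isUnit_wB2 k U₁ U₂ hU₂ j).unit⁻¹ : (Bq k U₁ U₂ j)ˣ)

lemma wB1_bB1 (hU₁ : U₁.coeff 0 ≠ 0) (j : ℕ) :
    wB1 k U₁ U₂ j * bB1 k U₁ U₂ hU₁ j = 1 := (isUnit_wB1 k U₁ U₂ hU₁ j).mul_val_inv
lemma wB2_bB2 (hU₂ : U₂.coeff 0 ≠ 0) (j : ℕ) :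
    wB2 k U₁ U₂ j * bB2 k U₁ U₂ hU₂ j = 1 := (isUnit_wB2 k U₁ U₂ hU₂ j).mul_val_inv

/-- the changed variables in `Bq j` -/
def abv (hU₁ : U₁.coeff 0 ≠ 0) (hU₂ : U₂.coeff 0 ≠ 0) (j : ℕ) : Fin 3 → Bq k U₁ U₂ j :=
  ![xb k U₁ U₂ j 0 * bB1 k U₁ U₂ hU₁ j,
    xb k U₁ U₂ j 1 * bB2 k U₁ U₂ hU₂ j,
    xb k U₁ U₂ j 2 * bB1 k U₁ U₂ hU₁ j * bB2 k U₁ U₂ hU₂ j]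

lemma abv_mem (hU₁ : U₁.coeff 0 ≠ 0) (hU₂ : U₂.coeff 0 ≠ 0) (j : ℕ) (i : Fin 3) :
    abv k U₁ U₂ hU₁ hU₂ j i ∈ mb k U₁ U₂ j := by
  fin_cases i
  · exact Ideal.mul_mem_right _ _ (xb_mem k U₁ U₂ j _)
  · exact Ideal.mul_mem_right _ _ (xb_mem k U₁ U₂ j _)
  · exact Ideal.mul_mem_right _ _ (Ideal.mul_mem_right _ _ (xb_mem k U₁ U₂ j _))

/-- the level-`j` evaluation map -/
def ΘB (hU₁ : U₁.coeff 0 ≠ 0) (hU₂ : U₂.coeff 0 ≠ 0) (j : ℕ) :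
    MvPowerSeries (Fin 3) k →+* Bq k U₁ U₂ j :=
  evHom (abv k U₁ U₂ hU₁ hU₂ j) j (abv_mem k U₁ U₂ hU₁ hU₂ j) (mb_pow k U₁ U₂ j)

end S6
section S7
variable (k : Type*) [Field k] (U₁ U₂ : Polynomial k)
variable (hU₁ : U₁.coeff 0 ≠ 0) (hU₂ : U₂.coeff 0 ≠ 0)

/-- transition ring hom between levels -/
def piB {j j' : ℕ} (hmn : j ≤ j') : Bq k U₁ U₂ j' →+* Bq k U₁ U₂ j :=
  (AdicCompletion.transitionMapₐ (mid k U₁ U₂) hmn).toRingHom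

lemma piB_mk {j j' : ℕ} (hmn : j ≤ j') (q : Qr k U₁ U₂) :
    piB k U₁ U₂ hmn (mkB k U₁ U₂ j' q) = mkB k U₁ U₂ j q := rfl

lemma piB_alg {j j' : ℕ} (hmn : j ≤ j') (c : k) :
    piB k U₁ U₂ hmn (algebraMap k (Bq k U₁ U₂ j') c) = algebraMap k (Bq k U₁ U₂ j) c := rfl

lemma piB_xb {j j' : ℕ} (hmn : j ≤ j') (i : Fin 3) :
    piB k U₁ U₂ hmn (xb k U₁ U₂ j' i) = xb k U₁ U₂ j i := rfl

lemma inv_unique_comm {C : Type*} [CommRing C] {u a b : C} (ha : u * a = 1) (hb : u * b = 1) :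
    a = b := by
  calc a = a * (u * b) := by rw [hb, mul_one]
  _ = b * (u * a) := by ring
  _ = b := by rw [ha, mul_one]

lemma piB_wB1 {j j' : ℕ} (hmn : j ≤ j') :
    piB k U₁ U₂ hmn (wB1 k U₁ U₂ j') = wB1 k U₁ U₂ j := by
  rw [wB1, wB1, ringHom_polyAeval _ (piB_alg k U₁ U₂ hmn), piB_xb]

lemma piB_wB2 {j j' : ℕ} (hmn : j ≤ j') :
    piB k U₁ U₂ hmn (wB2 k U₁ U₂ j') = wB2 k U₁ U₂ j := by
  rw [wB2, wB2, ringHom_polyAeval _ (piB_alg k U₁ U₂ hmn), piB_xb]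

lemma piB_bB1 {j j' : ℕ} (hmn : j ≤ j') :
    piB k U₁ U₂ hmn (bB1 k U₁ U₂ hU₁ j') = bB1 k U₁ U₂ hU₁ j := by
  apply inv_unique_comm (u := wB1 k U₁ U₂ j)
  · rw [← piB_wB1 k U₁ U₂ hmn, ← map_mul, wB1_bB1, map_one]
  · exact wB1_bB1 k U₁ U₂ hU₁ j

lemma piB_bB2 {j j' : ℕ} (hmn : j ≤ j') :
    piB k U₁ U₂ hmn (bB2 k U₁ U₂ hU₂ j') = bB2 k U₁ U₂ hU₂ j := by
  apply inv_unique_comm (u := wB2 k U₁ U₂ j)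
  · rw [← piB_wB2 k U₁ U₂ hmn, ← map_mul, wB2_bB2, map_one]
  · exact wB2_bB2 k U₁ U₂ hU₂ j

lemma piB_abv {j j' : ℕ} (hmn : j ≤ j') (i : Fin 3) :
    piB k U₁ U₂ hmn (abv k U₁ U₂ hU₁ hU₂ j' i) = abv k U₁ U₂ hU₁ hU₂ j i := by
  fin_cases i
  · show piB k U₁ U₂ hmn (xb k U₁ U₂ j' 0 * bB1 k U₁ U₂ hU₁ j')
        = xb k U₁ U₂ j 0 * bB1 k U₁ U₂ hU₁ j
    rw [map_mul, piB_xb, piB_bB1]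
  · show piB k U₁ U₂ hmn (xb k U₁ U₂ j' 1 * bB2 k U₁ U₂ hU₂ j')
        = xb k U₁ U₂ j 1 * bB2 k U₁ U₂ hU₂ j
    rw [map_mul, piB_xb, piB_bB2]
  · show piB k U₁ U₂ hmn (xb k U₁ U₂ j' 2 * bB1 k U₁ U₂ hU₁ j' * bB2 k U₁ U₂ hU₂ j')
        = xb k U₁ U₂ j 2 * bB1 k U₁ U₂ hU₁ j * bB2 k U₁ U₂ hU₂ j
    rw [map_mul, map_mul, piB_xb, piB_bB1, piB_bB2]

lemma ThetaB_compat {j j' : ℕ} (hmn : j ≤ j') (F : MvPowerSeries (Fin 3) k) :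
    piB k U₁ U₂ hmn (ΘB k U₁ U₂ hU₁ hU₂ j' F) = ΘB k U₁ U₂ hU₁ hU₂ j F := by
  have h := ev_comp (piB k U₁ U₂ hmn) (piB_alg k U₁ U₂ hmn) (abv k U₁ U₂ hU₁ hU₂ j')
    (𝔫 := mb k U₁ U₂ j)
    (fun i => by rw [piB_abv]; exact abv_mem k U₁ U₂ hU₁ hU₂ j i)
    (mb_pow k U₁ U₂ j) hmn F
  rw [show (fun i => piB k U₁ U₂ hmn (abv k U₁ U₂ hU₁ hU₂ j' i)) = abv k U₁ U₂ hU₁ hU₂ j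
    from funext (piB_abv k U₁ U₂ hU₁ hU₂ hmn)] at h
  exact h

instance : @Module (Qr k U₁ U₂) (Qr k U₁ U₂) _ (AddCommGroup.toAddCommMonoid) := Semiring.toModule

/-- The global map into the adic completion. -/
def Theta : MvPowerSeries (Fin 3) k →+* AdicCompletion (mid k U₁ U₂) (Qr k U₁ U₂) where
  toFun F := ⟨fun j => ΘB k U₁ U₂ hU₁ hU₂ j F,
    fun {j j'} hmn => ThetaB_compat k U₁ U₂ hU₁ hU₂ hmn F⟩
  map_one' := Subtype.ext (funext fun j => (ΘB k U₁ U₂ hU₁ hU₂ j).map_one)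
  map_mul' F G := Subtype.ext (funext fun j => (ΘB k U₁ U₂ hU₁ hU₂ j).map_mul F G)
  map_zero' := Subtype.ext (funext fun j => (ΘB k U₁ U₂ hU₁ hU₂ j).map_zero)
  map_add' F G := Subtype.ext (funext fun j => (ΘB k U₁ U₂ hU₁ hU₂ j).map_add F G)

lemma Theta_val (F : MvPowerSeries (Fin 3) k) (j : ℕ) :
    (Theta k U₁ U₂ hU₁ hU₂ F).val j = ΘB k U₁ U₂ hU₁ hU₂ j F := rfl

lemma mk_fpoly (j : ℕ) :
    mkB k U₁ U₂ j (mkI k U₁ U₂ (fpoly k U₁ U₂)) = 0 := by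
  have h : mkI k U₁ U₂ (fpoly k U₁ U₂) = 0 := by
    have hmem : fpoly k U₁ U₂ ∈ Iid k U₁ U₂ := Ideal.subset_span rfl
    exact Ideal.Quotient.eq_zero_iff_mem.2 hmem
  rw [h, map_zero]

lemma mkBI_alg (j : ℕ) (c : k) :
    (mkB k U₁ U₂ j).comp (mkI k U₁ U₂) (algebraMap k (MvPolynomial (Fin 3) k) c)
      = algebraMap k (Bq k U₁ U₂ j) c := rfl

/-- image of the defining polynomial in `Bq j` -/
lemma mk_fpoly_expand (j : ℕ) :
    (xb k U₁ U₂ j 2)^2 + xb k U₁ U₂ j 0 * xb k U₁ U₂ j 1 * xb k U₁ U₂ j 2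
      + (xb k U₁ U₂ j 0)^2 * (xb k U₁ U₂ j 1 * wB2 k U₁ U₂ j)
      + (xb k U₁ U₂ j 1)^2 * (xb k U₁ U₂ j 0 * wB1 k U₁ U₂ j) = 0 := by
  have h := mk_fpoly k U₁ U₂ j
  rw [fpoly] at h
  set φ := (mkB k U₁ U₂ j).comp (mkI k U₁ U₂) with hφ
  have hx : ∀ i : Fin 3, φ (X i) = xb k U₁ U₂ j i := fun i => rfl
  have h1 : mkB k U₁ U₂ j (mkI k U₁ U₂ ((X 2)^2 + X 0 * X 1 * X 2
      + (X 0)^2 * (X 1 * Polynomial.aeval (X 1) U₂)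
      + (X 1)^2 * (X 0 * Polynomial.aeval (X 0) U₁)))
      = φ ((X 2)^2 + X 0 * X 1 * X 2
      + (X 0)^2 * (X 1 * Polynomial.aeval (X 1) U₂)
      + (X 1)^2 * (X 0 * Polynomial.aeval (X 0) U₁)) := rfl
  rw [h1] at h
  simp only [map_add, map_mul, map_pow, hx] at h
  rw [ringHom_polyAeval φ (mkBI_alg k U₁ U₂ j), ringHom_polyAeval φ (mkBI_alg k U₁ U₂ j),
    hx, hx] at h
  rw [← wB2, ← wB1] at h
  exact h

lemma ThetaB_gps (j : ℕ) : ΘB k U₁ U₂ hU₁ hU₂ j (gps : MvPowerSeries (Fin 3) k) = 0 := by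
  set x0 := xb k U₁ U₂ j 0
  set x1 := xb k U₁ U₂ j 1
  set x2 := xb k U₁ U₂ j 2
  set w1 := wB1 k U₁ U₂ j
  set w2 := wB2 k U₁ U₂ j
  set b1 := bB1 k U₁ U₂ hU₁ j
  set b2 := bB2 k U₁ U₂ hU₂ j
  have hb1 : w1 * b1 = 1 := wB1_bB1 k U₁ U₂ hU₁ j
  have hb2 : w2 * b2 = 1 := wB2_bB2 k U₁ U₂ hU₂ j
  have hXv : ∀ i : Fin 3, ΘB k U₁ U₂ hU₁ hU₂ j ((MvPowerSeries.X i : MvPowerSeries (Fin 3) k))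
      = abv k U₁ U₂ hU₁ hU₂ j i := fun i =>
    ev_X (abv k U₁ U₂ hU₁ hU₂ j) (abv_mem k U₁ U₂ hU₁ hU₂ j) (mb_pow k U₁ U₂ j) i
  have habv0 : abv k U₁ U₂ hU₁ hU₂ j 0 = x0 * b1 := rfl
  have habv1 : abv k U₁ U₂ hU₁ hU₂ j 1 = x1 * b2 := rfl
  have habv2 : abv k U₁ U₂ hU₁ hU₂ j 2 = x2 * b1 * b2 := rfl
  rw [gps, map_add, map_add, map_add, map_mul, map_mul, map_mul, map_mul, map_pow, map_pow,
    map_pow, hXv, hXv, hXv, habv0, habv1, habv2]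
  set S := (x2 * b1 * b2)^2 + x0 * b1 * (x1 * b2) * (x2 * b1 * b2)
    + (x0 * b1)^2 * (x1 * b2) + x0 * b1 * (x1 * b2)^2 with hS
  have key : w1^2 * w2^2 * S = x2^2 + x0 * x1 * x2 + x0^2 * (x1 * w2) + x1^2 * (x0 * w1) := by
    rw [hS]
    linear_combination ((x2^2 + x0*x1*x2) * (w1*b1 + 1) * (w2*b2)^2
        + x0^2*x1*w2 * (w1*b1 + 1) * (w2*b2) + x0*x1^2*w1 * (w2*b2)^2) * hb1
      + ((x2^2 + x0*x1*x2) * (w2*b2 + 1) + x0^2*x1*w2 + x0*x1^2*w1 * (w2*b2 + 1)) * hb2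
  have hzero : w1^2 * w2^2 * S = 0 := by
    rw [key]
    exact mk_fpoly_expand k U₁ U₂ j
  have hS0 : S = (b1^2 * b2^2) * (w1^2 * w2^2 * S) := by
    have : (w1 * b1)^2 * (w2 * b2)^2 * S = S := by rw [hb1, hb2]; ring
    calc S = (w1 * b1)^2 * (w2 * b2)^2 * S := this.symm
    _ = (b1^2 * b2^2) * (w1^2 * w2^2 * S) := by ring
  rw [hS0, hzero, mul_zero]

end S7
section S8
variable (k : Type*) [Field k]

lemma sdeg_mono {d e : Fin 3 →₀ ℕ} (h : d ≤ e) : sdeg d ≤ sdeg e := by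
  have h0 := h 0; have h1 := h 1; have h2 := h 2
  simp only [sdeg, Fin.sum_univ_three]; omega

/-- the ideal of power series of order `≥ j` -/
def Oid (j : ℕ) : Ideal (MvPowerSeries (Fin 3) k) where
  carrier := {F | ∀ d, sdeg d < j → MvPowerSeries.coeff d F = 0}
  add_mem' := by
    intro F G hF hG d hd
    rw [map_add, hF d hd, hG d hd, add_zero]
  zero_mem' := by intro d hd; rw [map_zero]
  smul_mem' := by
    intro c F hF d hd
    rw [smul_eq_mul, MvPowerSeries.coeff_mul]
    apply Finset.sum_eq_zero
    intro p hp
    have hsum : p.1 + p.2 = d := Finset.HasAntidiagonal.mem_antidiagonal.1 hp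
    have h2 : sdeg p.2 < j := lt_of_le_of_lt (sdeg_mono (hsum ▸ le_add_self)) hd
    rw [hF p.2 h2, mul_zero]

lemma mem_Oid {j : ℕ} {F : MvPowerSeries (Fin 3) k} :
    F ∈ Oid k j ↔ ∀ d, sdeg d < j → MvPowerSeries.coeff d F = 0 := Iff.rfl

lemma Oid_mul_le (a b : ℕ) : Oid k a * Oid k b ≤ Oid k (a + b) := by
  rw [Ideal.mul_le]
  intro F hF G hG
  intro d hd
  rw [MvPowerSeries.coeff_mul]
  apply Finset.sum_eq_zero
  intro p hp
  have hsum : p.1 + p.2 = d := Finset.HasAntidiagonal.mem_antidiagonal.1 hp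
  have hs : sdeg p.1 + sdeg p.2 < a + b := by
    have := sdeg_add p.1 p.2
    rw [hsum] at this  -- sdeg p.1 + sdeg p.2 = sdeg d? no: sdeg (p.1+p.2) = ...
    omega
  rcases Nat.lt_or_ge (sdeg p.1) a with h1 | h1
  · rw [hF p.1 h1, zero_mul]
  · rw [hG p.2 (by omega), mul_zero]

lemma X_mem_Oid_one (i : Fin 3) : (MvPowerSeries.X i : MvPowerSeries (Fin 3) k) ∈ Oid k 1 := by
  intro d hd
  have hd0 : d = 0 := by
    have hz : ∀ i', d i' = 0 := fun i' => by have := apply_le_sdeg d i'; omega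
    ext i'
    simp [hz]
  subst hd0
  classical
  rw [MvPowerSeries.coeff_X]
  rw [if_neg]
  intro h
  have := DFunLike.congr_fun h i
  simp [Finsupp.single_apply] at this

lemma Oid_one_pow (j : ℕ) : (Oid k 1) ^ j ≤ Oid k j := by
  induction j with
  | zero =>
    rw [pow_zero]
    intro F _
    intro d hd
    omega
  | succ j ih =>
    rw [pow_succ]
    calc (Oid k 1) ^ j * Oid k 1 ≤ Oid k j * Oid k 1 := Ideal.mul_mono_left ih
    _ ≤ Oid k (j + 1) := Oid_mul_le k j 1

def nX : Ideal (MvPowerSeries (Fin 3) k) :=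
  Ideal.span {(MvPowerSeries.X 0 : MvPowerSeries (Fin 3) k), MvPowerSeries.X 1,
    MvPowerSeries.X 2}

lemma nX_le_Oid_one : nX k ≤ Oid k 1 := by
  rw [nX, Ideal.span_le]
  intro x hx
  rcases hx with h | h | h <;> (subst h; exact X_mem_Oid_one k _)

lemma nX_pow_le_Oid (j : ℕ) : (nX k) ^ j ≤ Oid k j :=
  le_trans (Ideal.pow_right_mono (nX_le_Oid_one k) j) (Oid_one_pow k j)

variable (U₁ U₂ : Polynomial k)

/-- the ideal we quotient by on the power series side, at level `j` -/
def JO (j : ℕ) : Ideal (MvPowerSeries (Fin 3) k) := Ideal.span {(gps : MvPowerSeries (Fin 3) k)} ⊔ Oid k j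

def Cq (j : ℕ) := MvPowerSeries (Fin 3) k ⧸ JO k j

instance (j : ℕ) : CommRing (Cq k j) := Ideal.Quotient.commRing _
instance (j : ℕ) : Algebra k (Cq k j) := Ideal.Quotient.algebra k

def mkC (j : ℕ) : MvPowerSeries (Fin 3) k →+* Cq k j := Ideal.Quotient.mk _

def yb (j : ℕ) (i : Fin 3) : Cq k j := mkC k j (MvPowerSeries.X i)

def mC (j : ℕ) : Ideal (Cq k j) := (nX k).map (mkC k j)

lemma yb_mem (j : ℕ) (i : Fin 3) : yb k j i ∈ mC k j := by
  apply Ideal.mem_map_of_mem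
  apply Ideal.subset_span
  fin_cases i <;> simp

lemma mC_pow (j : ℕ) : (mC k j) ^ j = ⊥ := by
  rw [mC, ← Ideal.map_pow, Ideal.map_eq_bot_iff_le_ker, mkC]
  refine le_trans ?_ (Ideal.mk_ker (I := JO k j)).ge
  rw [JO]
  exact le_trans (nX_pow_le_Oid k j) le_sup_right

lemma mkC_gps (j : ℕ) : mkC k j (gps : MvPowerSeries (Fin 3) k) = 0 := by
  apply Ideal.Quotient.eq_zero_iff_mem.2
  exact Ideal.mem_sup_left (Ideal.subset_span rfl)

lemma mkC_Oid (j : ℕ) (F : MvPowerSeries (Fin 3) k)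
    (hF : ∀ d, sdeg d < j → MvPowerSeries.coeff d F = 0) : mkC k j F = 0 := by
  apply Ideal.Quotient.eq_zero_iff_mem.2
  exact Ideal.mem_sup_right hF

lemma mkC_alg (j : ℕ) (c : k) :
    mkC k j (algebraMap k (MvPowerSeries (Fin 3) k) c) = algebraMap k (Cq k j) c := rfl

/-- `mkC` is truncated evaluation at the variables -/
lemma mkC_eq_ev (j : ℕ) (F : MvPowerSeries (Fin 3) k) :
    mkC k j F = ev (yb k j) j F :=
  hom_eq_ev (mkC k j) (mkC_alg k j) j (mkC_Oid k j) F

end S8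
section S9
variable (k : Type*) [Field k] (U₁ U₂ : Polynomial k)
variable (hU₁ : U₁.coeff 0 ≠ 0) (hU₂ : U₂.coeff 0 ≠ 0)

lemma ThetaB_ker_bound (j : ℕ) (F : MvPowerSeries (Fin 3) k)
    (hF : ΘB k U₁ U₂ hU₁ hU₂ j F = 0) : F ∈ JO k j := by
  classical
  obtain ⟨ω₁, hω₁⟩ := exists_fixedPoint (mC k j) (mC_pow k j) (yb k j 0) (yb_mem k j 0) U₁
  obtain ⟨ω₂, hω₂⟩ := exists_fixedPoint (mC k j) (mC_pow k j) (yb k j 1) (yb_mem k j 1) U₂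
  set vv : Fin 3 → Cq k j := ![yb k j 0 * ω₁, yb k j 1 * ω₂, yb k j 2 * ω₁ * ω₂] with hvv
  have hvv0 : vv 0 = yb k j 0 * ω₁ := rfl
  have hvv1 : vv 1 = yb k j 1 * ω₂ := rfl
  have hvv2 : vv 2 = yb k j 2 * ω₁ * ω₂ := rfl
  set ξ : MvPolynomial (Fin 3) k →+* Cq k j := (MvPolynomial.aeval vv).toRingHom with hξdef
  have hξapp : ∀ p, ξ p = MvPolynomial.aeval vv p := fun p => rfl
  have hξalg : ∀ c : k, ξ (algebraMap k (MvPolynomial (Fin 3) k) c)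
      = algebraMap k (Cq k j) c := by
    intro c
    rw [hξapp, MvPolynomial.algebraMap_eq, MvPolynomial.aeval_C]
  have hξX : ∀ i, ξ (X i) = vv i := fun i => by rw [hξapp, MvPolynomial.aeval_X]
  have hcomp : ∀ (x : MvPolynomial (Fin 3) k) (U : Polynomial k),
      ξ (Polynomial.aeval x U) = Polynomial.aeval (ξ x) U := fun x U =>
    ringHom_polyAeval ξ hξalg x U
  -- the image of gps in Cq j vanishes
  have hgexp : (yb k j 2)^2 + yb k j 0 * yb k j 1 * yb k j 2
      + (yb k j 0)^2 * yb k j 1 + yb k j 0 * (yb k j 1)^2 = 0 := by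
    have h1 : mkC k j (gps : MvPowerSeries (Fin 3) k)
        = (yb k j 2)^2 + yb k j 0 * yb k j 1 * yb k j 2
          + (yb k j 0)^2 * yb k j 1 + yb k j 0 * (yb k j 1)^2 := by
      rw [gps]
      simp only [map_add, map_mul, map_pow]
      rfl
    rw [← h1, mkC_gps]
  -- ξ kills fpoly
  have hfker : ξ (fpoly k U₁ U₂) = 0 := by
    rw [fpoly]
    simp only [map_add, map_mul, map_pow]
    rw [hcomp, hcomp, hξX, hξX, hξX, hvv0, hvv1, hvv2, hω₁, hω₂]
    linear_combination (ω₁^2 * ω₂^2) * hgexp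
  -- lift to Qr
  have hIle : ∀ a ∈ Iid k U₁ U₂, ξ a = 0 := by
    intro a ha
    have hle : Iid k U₁ U₂ ≤ RingHom.ker ξ := by
      rw [Iid, Ideal.span_le]
      intro x hx
      rcases hx with rfl
      exact RingHom.mem_ker.2 hfker
    exact RingHom.mem_ker.1 (hle ha)
  set ξQ : Qr k U₁ U₂ →+* Cq k j := Ideal.Quotient.lift (Iid k U₁ U₂) ξ hIle with hξQdef
  have hξQ : ∀ p, ξQ (mkI k U₁ U₂ p) = ξ p := fun p => rfl
  -- kill mid ^ j
  have hmidmap : mid k U₁ U₂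
      = (Ideal.span {(X 0 : MvPolynomial (Fin 3) k), X 1, X 2}).map (mkI k U₁ U₂) := by
    rw [mid, Ideal.map_span]
    congr 1
    simp [Set.image_insert_eq]
  have hnker : ∀ a ∈ ((mid k U₁ U₂) ^ j • ⊤ : Ideal (Qr k U₁ U₂)), ξQ a = 0 := by
    intro a ha
    rw [smul_top_eq, hmidmap, ← Ideal.map_pow] at ha
    have hle : (Ideal.span {(X 0 : MvPolynomial (Fin 3) k), X 1, X 2} ^ j).map
        (mkI k U₁ U₂) ≤ RingHom.ker ξQ := by
      rw [Ideal.map_le_iff_le_comap]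
      intro p hp
      have h1 : ξ p ∈ (Ideal.span {(X 0 : MvPolynomial (Fin 3) k), X 1, X 2} ^ j).map ξ :=
        Ideal.mem_map_of_mem ξ hp
      rw [Ideal.map_pow] at h1
      have h2 : (Ideal.span {(X 0 : MvPolynomial (Fin 3) k), X 1, X 2}).map ξ ≤ mC k j := by
        rw [Ideal.map_le_iff_le_comap, Ideal.span_le]
        intro x hx
        rcases hx with rfl | rfl | rfl
        · have h5 : ξ (X 0) ∈ mC k j := by
            rw [hξX, hvv0]; exact Ideal.mul_mem_right _ _ (yb_mem k j 0)
          exact h5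
        · have h5 : ξ (X 1) ∈ mC k j := by
            rw [hξX, hvv1]; exact Ideal.mul_mem_right _ _ (yb_mem k j 1)
          exact h5
        · have h5 : ξ (X 2) ∈ mC k j := by
            rw [hξX, hvv2]
            exact Ideal.mul_mem_right _ _ (Ideal.mul_mem_right _ _ (yb_mem k j 2))
          exact h5
      have h3 := (Ideal.pow_right_mono h2 j) h1
      rw [mC_pow] at h3
      have h4 : ξ p = 0 := by simpa using h3
      have h5 : ξQ (mkI k U₁ U₂ p) = 0 := by rw [hξQ]; exact h4
      exact h5
    exact RingHom.mem_ker.1 (hle ha)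
  -- descend to Bq j
  set Xi : Bq k U₁ U₂ j →+* Cq k j :=
    Ideal.Quotient.lift ((mid k U₁ U₂) ^ j • ⊤ : Ideal (Qr k U₁ U₂)) ξQ hnker with hXidef
  have hXiB : ∀ q, Xi (mkB k U₁ U₂ j q) = ξQ q := fun q => rfl
  have hXixb : ∀ i, Xi (xb k U₁ U₂ j i) = vv i := by
    intro i
    rw [xb, hXiB, hξQ, hξX]
  have hXialg : ∀ c : k, Xi (algebraMap k (Bq k U₁ U₂ j) c) = algebraMap k (Cq k j) c := by
    intro c
    rw [algebraMap_Bq, hXiB, hξQ]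
    rw [show (MvPolynomial.C c : MvPolynomial (Fin 3) k)
      = algebraMap k (MvPolynomial (Fin 3) k) c from rfl]
    exact hξalg c
  have hXiw1 : Xi (wB1 k U₁ U₂ j) = ω₁ := by
    rw [wB1, ringHom_polyAeval Xi hXialg, hXixb, hvv0, hω₁]
  have hXiw2 : Xi (wB2 k U₁ U₂ j) = ω₂ := by
    rw [wB2, ringHom_polyAeval Xi hXialg, hXixb, hvv1, hω₂]
  have hXib1 : ω₁ * Xi (bB1 k U₁ U₂ hU₁ j) = 1 := by
    rw [← hXiw1, ← map_mul, wB1_bB1, map_one]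
  have hXib2 : ω₂ * Xi (bB2 k U₁ U₂ hU₂ j) = 1 := by
    rw [← hXiw2, ← map_mul, wB2_bB2, map_one]
  have hXiabv : ∀ i, Xi (abv k U₁ U₂ hU₁ hU₂ j i) = yb k j i := by
    intro i
    fin_cases i
    · show Xi (xb k U₁ U₂ j 0 * bB1 k U₁ U₂ hU₁ j) = yb k j 0
      rw [map_mul, hXixb, hvv0]
      linear_combination (yb k j 0) * hXib1
    · show Xi (xb k U₁ U₂ j 1 * bB2 k U₁ U₂ hU₂ j) = yb k j 1
      rw [map_mul, hXixb, hvv1]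
      linear_combination (yb k j 1) * hXib2
    · show Xi (xb k U₁ U₂ j 2 * bB1 k U₁ U₂ hU₁ j * bB2 k U₁ U₂ hU₂ j) = yb k j 2
      rw [map_mul, map_mul, hXixb, hvv2]
      linear_combination (yb k j 2 * ω₂ * (Xi (bB2 k U₁ U₂ hU₂ j))) * hXib1
        + (yb k j 2) * hXib2
  -- Xi ∘ ΘB = mkC
  have hXiTheta : Xi (ΘB k U₁ U₂ hU₁ hU₂ j F) = mkC k j F := by
    have h1 : Xi (ΘB k U₁ U₂ hU₁ hU₂ j F)
        = aeval (fun i => Xi (abv k U₁ U₂ hU₁ hU₂ j i))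
            (MvPowerSeries.trunc k (Nj j) F) := by
      exact ringHom_aeval Xi hXialg (abv k U₁ U₂ hU₁ hU₂ j) _
    rw [h1, show (fun i => Xi (abv k U₁ U₂ hU₁ hU₂ j i)) = yb k j from funext hXiabv]
    rw [mkC_eq_ev]
    rfl
  rw [hF, map_zero] at hXiTheta
  exact Ideal.Quotient.eq_zero_iff_mem.1 hXiTheta.symm

end S9
section S10
variable (k : Type*) [Field k] (U₁ U₂ : Polynomial k)
variable (hU₁ : U₁.coeff 0 ≠ 0) (hU₂ : U₂.coeff 0 ≠ 0)

lemma ThetaB_X (j : ℕ) (i : Fin 3) :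
    ΘB k U₁ U₂ hU₁ hU₂ j ((MvPowerSeries.X i : MvPowerSeries (Fin 3) k))
      = abv k U₁ U₂ hU₁ hU₂ j i :=
  ev_X (abv k U₁ U₂ hU₁ hU₂ j) (abv_mem k U₁ U₂ hU₁ hU₂ j) (mb_pow k U₁ U₂ j) i

lemma ThetaB_algebraMap (j : ℕ) (c : k) :
    ΘB k U₁ U₂ hU₁ hU₂ j (algebraMap k (MvPowerSeries (Fin 3) k) c)
      = algebraMap k (Bq k U₁ U₂ j) c :=
  ev_algebraMap (abv k U₁ U₂ hU₁ hU₂ j) (abv_mem k U₁ U₂ hU₁ hU₂ j) (mb_pow k U₁ U₂ j) c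

lemma ThetaB_surjective (j : ℕ) : Function.Surjective (ΘB k U₁ U₂ hU₁ hU₂ j) := by
  set S := (ΘB k U₁ U₂ hU₁ hU₂ j).range with hSdef
  suffices htop : ∀ b, b ∈ S by
    intro b; exact htop b
  have halg : ∀ c : k, algebraMap k (Bq k U₁ U₂ j) c ∈ S :=
    fun c => ⟨_, ThetaB_algebraMap k U₁ U₂ hU₁ hU₂ j c⟩
  have haev : ∀ s, s ∈ S → ∀ U : Polynomial k, Polynomial.aeval s U ∈ S := by
    intro s hs U
    rw [Polynomial.aeval_eq_sum_range]
    refine Subring.sum_mem _ (fun i _ => ?_)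
    rw [Algebra.smul_def]
    exact Subring.mul_mem _ (halg _) (Subring.pow_mem _ hs i)
  set x0 := xb k U₁ U₂ j 0 with hx0def
  set x1 := xb k U₁ U₂ j 1 with hx1def
  set x2 := xb k U₁ U₂ j 2 with hx2def
  set w1 := wB1 k U₁ U₂ j with hw1def
  set w2 := wB2 k U₁ U₂ j with hw2def
  set b1 := bB1 k U₁ U₂ hU₁ j with hb1def
  set b2 := bB2 k U₁ U₂ hU₂ j with hb2def
  have hb1 : w1 * b1 = 1 := wB1_bB1 k U₁ U₂ hU₁ j
  have hb2 : w2 * b2 = 1 := wB2_bB2 k U₁ U₂ hU₂ j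
  have ha0S : x0 * b1 ∈ S := ⟨_, ThetaB_X k U₁ U₂ hU₁ hU₂ j 0⟩
  have ha1S : x1 * b2 ∈ S := ⟨_, ThetaB_X k U₁ U₂ hU₁ hU₂ j 1⟩
  have ha2S : x2 * b1 * b2 ∈ S := ⟨_, ThetaB_X k U₁ U₂ hU₁ hU₂ j 2⟩
  have hw1e : w1 = Polynomial.aeval x0 U₁ := rfl
  have hw2e : w2 = Polynomial.aeval x1 U₂ := rfl
  have approx : ∀ r : ℕ, ∃ s₀, s₀ ∈ S ∧ ∃ s₁, s₁ ∈ S ∧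
      x0 - s₀ ∈ (mb k U₁ U₂ j)^r ∧ x1 - s₁ ∈ (mb k U₁ U₂ j)^r := by
    intro r
    induction r with
    | zero =>
      refine ⟨0, S.zero_mem, 0, S.zero_mem, ?_, ?_⟩ <;>
        (rw [pow_zero, Ideal.one_eq_top]; exact Submodule.mem_top)
    | succ r ih =>
      obtain ⟨s₀, hs₀S, s₁, hs₁S, h₀, h₁⟩ := ih
      refine ⟨(x0 * b1) * Polynomial.aeval s₀ U₁, S.mul_mem ha0S (haev _ hs₀S U₁),
        (x1 * b2) * Polynomial.aeval s₁ U₂, S.mul_mem ha1S (haev _ hs₁S U₂), ?_, ?_⟩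
      · obtain ⟨c, hc⟩ := Ideal.mem_span_singleton.1 (polyAeval_sub_mem U₁ x0 s₀)
        have h1 : (x0 * b1) * (Polynomial.aeval x0 U₁) = x0 := by
          rw [← hw1e]; linear_combination x0 * hb1
        have hrw : x0 - (x0 * b1) * Polynomial.aeval s₀ U₁ = ((x0 * b1) * (x0 - s₀)) * c := by
          linear_combination (-1 : Bq k U₁ U₂ j) * h1 + (x0 * b1) * hc
        rw [hrw]
        apply Ideal.mul_mem_right
        rw [pow_succ']
        exact Ideal.mul_mem_mul (Ideal.mul_mem_right _ _ (xb_mem k U₁ U₂ j 0)) h₀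
      · obtain ⟨c, hc⟩ := Ideal.mem_span_singleton.1 (polyAeval_sub_mem U₂ x1 s₁)
        have h1 : (x1 * b2) * (Polynomial.aeval x1 U₂) = x1 := by
          rw [← hw2e]; linear_combination x1 * hb2
        have hrw : x1 - (x1 * b2) * Polynomial.aeval s₁ U₂ = ((x1 * b2) * (x1 - s₁)) * c := by
          linear_combination (-1 : Bq k U₁ U₂ j) * h1 + (x1 * b2) * hc
        rw [hrw]
        apply Ideal.mul_mem_right
        rw [pow_succ']
        exact Ideal.mul_mem_mul (Ideal.mul_mem_right _ _ (xb_mem k U₁ U₂ j 1)) h₁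
  obtain ⟨s₀, hs₀S, s₁, hs₁S, h₀, h₁⟩ := approx j
  rw [mb_pow] at h₀ h₁
  have hx0S : x0 ∈ S := by
    have h2 : x0 - s₀ = 0 := by simpa using h₀
    have h3 : x0 = s₀ := by linear_combination h2
    rw [h3]; exact hs₀S
  have hx1S : x1 ∈ S := by
    have h2 : x1 - s₁ = 0 := by simpa using h₁
    have h3 : x1 = s₁ := by linear_combination h2
    rw [h3]; exact hs₁S
  have hw1S : w1 ∈ S := haev x0 hx0S U₁
  have hw2S : w2 ∈ S := haev x1 hx1S U₂
  have hx2S : x2 ∈ S := by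
    have h2 : (x2 * b1 * b2) * (w1 * w2) = x2 := by
      linear_combination (x2 * w1 * b1) * hb2 + x2 * hb1
    rw [← h2]
    exact S.mul_mem ha2S (S.mul_mem hw1S hw2S)
  have hxS : ∀ i : Fin 3, xb k U₁ U₂ j i ∈ S := by
    intro i; fin_cases i
    · exact hx0S
    · exact hx1S
    · exact hx2S
  intro b
  have hmkB_surj : Function.Surjective (mkB k U₁ U₂ j) := Ideal.Quotient.mk_surjective
  have hmkI_surj : Function.Surjective (mkI k U₁ U₂) := Ideal.Quotient.mk_surjective
  obtain ⟨q, hq⟩ := hmkB_surj b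
  obtain ⟨p, hp⟩ := hmkI_surj q
  rw [← hq, ← hp]
  clear hq hp q b
  induction p using MvPolynomial.induction_on with
  | C c =>
    have h2 : mkB k U₁ U₂ j (mkI k U₁ U₂ (MvPolynomial.C c))
        = algebraMap k (Bq k U₁ U₂ j) c := (algebraMap_Bq k U₁ U₂ j c).symm
    rw [h2]; exact halg c
  | add p q hp hq =>
    rw [map_add, map_add]; exact S.add_mem hp hq
  | mul_X p i hp =>
    rw [map_mul, map_mul]; exact S.mul_mem hp (hxS i)

end S10
section S11
variable (k : Type*) [Field k] (U₁ U₂ : Polynomial k)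
variable (hU₁ : U₁.coeff 0 ≠ 0) (hU₂ : U₂.coeff 0 ≠ 0)

lemma ThetaB_ker_decomp (j : ℕ) (F : MvPowerSeries (Fin 3) k)
    (hF : ΘB k U₁ U₂ hU₁ hU₂ j F = 0) :
    ∃ hh rr : MvPowerSeries (Fin 3) k, F = gps * hh + rr ∧
      (∀ d, sdeg d < j → MvPowerSeries.coeff d rr = 0) := by
  have hmem := ThetaB_ker_bound k U₁ U₂ hU₁ hU₂ j F hF
  rw [JO] at hmem
  obtain ⟨y, hy, z, hz, hsum⟩ := Submodule.mem_sup.1 hmem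
  obtain ⟨hh, hhh⟩ := Ideal.mem_span_singleton.1 hy
  exact ⟨hh, z, by rw [← hsum, hhh], fun d hd => hz d hd⟩

lemma Theta_surjective : Function.Surjective (Theta k U₁ U₂ hU₁ hU₂) := by
  intro c
  have hex : ∀ j, ∃ F, ΘB k U₁ U₂ hU₁ hU₂ j F = c.val j :=
    fun j => ThetaB_surjective k U₁ U₂ hU₁ hU₂ j (c.val j)
  choose Fs hFs using hex
  have hker : ∀ j, ΘB k U₁ U₂ hU₁ hU₂ j (Fs (j+1) - Fs j) = 0 := by
    intro j
    have h1 : ΘB k U₁ U₂ hU₁ hU₂ j (Fs (j+1)) = c.val j := by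
      rw [← ThetaB_compat k U₁ U₂ hU₁ hU₂ (Nat.le_succ j) (Fs (j+1)), hFs (j+1)]
      exact c.property (Nat.le_succ j)
    rw [map_sub, h1, hFs j]
    exact sub_self _
  choose hh rr hdec hord using
    fun j => ThetaB_ker_decomp k U₁ U₂ hU₁ hU₂ j _ (hker j)
  set Hs : ℕ → MvPowerSeries (Fin 3) k := fun j => ∑ i ∈ Finset.range j, hh i with hHsdef
  set F' : ℕ → MvPowerSeries (Fin 3) k := fun j => Fs j - gps * Hs j with hF'def
  have hθF' : ∀ j, ΘB k U₁ U₂ hU₁ hU₂ j (F' j) = c.val j := by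
    intro j
    have h1 : F' j = Fs j - gps * Hs j := rfl
    rw [h1, map_sub, map_mul, ThetaB_gps, zero_mul, sub_zero, hFs]
  have hstep : ∀ j, F' (j+1) - F' j = rr j := by
    intro j
    have h1 : F' (j+1) = Fs (j+1) - gps * (Hs j + hh j) := by
      have h2 : Hs (j+1) = Hs j + hh j := by
        show (∑ i ∈ Finset.range (j+1), hh i) = _
        rw [Finset.sum_range_succ]
      show Fs (j+1) - gps * Hs (j+1) = _
      rw [h2]
    have h3 : F' j = Fs j - gps * Hs j := rfl
    rw [h1, h3]
    linear_combination hdec j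
  set G : MvPowerSeries (Fin 3) k :=
    (fun d => MvPowerSeries.coeff d (F' (sdeg d + 1))) with hGdef
  have hGcoeff : ∀ d, MvPowerSeries.coeff d G
      = MvPowerSeries.coeff d (F' (sdeg d + 1)) := fun d => rfl
  have hstab : ∀ d : Fin 3 →₀ ℕ, ∀ i, sdeg d + 1 ≤ i →
      MvPowerSeries.coeff d (F' i) = MvPowerSeries.coeff d G := by
    intro d i
    induction i with
    | zero => omega
    | succ i ih =>
      intro hi
      rcases Nat.lt_or_ge (sdeg d + 1) (i+1) with hlt | hge
      · have h1 : MvPowerSeries.coeff d (F' (i+1)) = MvPowerSeries.coeff d (F' i) := by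
          have h2 := congrArg (MvPowerSeries.coeff d) (hstep i)
          rw [map_sub, hord i d (by omega)] at h2
          exact sub_eq_zero.1 h2
        rw [h1]
        exact ih (by omega)
      · have h4 : sdeg d + 1 = i + 1 := by omega
        rw [← h4]
        exact (hGcoeff d).symm
  refine ⟨G, ?_⟩
  apply AdicCompletion.ext
  intro j
  rw [Theta_val]
  have hdiff : ΘB k U₁ U₂ hU₁ hU₂ j (G - F' j) = 0 := by
    apply ev_eq_zero_of_order _ (abv_mem k U₁ U₂ hU₁ hU₂ j) (mb_pow k U₁ U₂ j)
    intro d hd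
    rw [map_sub, hstab d j (by omega), sub_self]
  have h3 : ΘB k U₁ U₂ hU₁ hU₂ j G
      = ΘB k U₁ U₂ hU₁ hU₂ j (F' j) + ΘB k U₁ U₂ hU₁ hU₂ j (G - F' j) := by
    rw [← map_add]
    congr 1
    ring
  rw [h3, hdiff, add_zero, hθF']

lemma Theta_gps_zero : Theta k U₁ U₂ hU₁ hU₂ (gps : MvPowerSeries (Fin 3) k) = 0 := by
  apply AdicCompletion.ext
  intro j
  rw [Theta_val, ThetaB_gps]
  rfl

lemma Theta_ker : RingHom.ker (Theta k U₁ U₂ hU₁ hU₂)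
    = Ideal.span {(gps : MvPowerSeries (Fin 3) k)} := by
  ext F
  constructor
  · intro hF
    have hz : ∀ j, ΘB k U₁ U₂ hU₁ hU₂ j F = 0 := by
      intro j
      have h1 : (Theta k U₁ U₂ hU₁ hU₂ F).val j
          = (0 : AdicCompletion (mid k U₁ U₂) (Qr k U₁ U₂)).val j :=
        congrArg (fun x : AdicCompletion (mid k U₁ U₂) (Qr k U₁ U₂) => x.val j)
          (RingHom.mem_ker.1 hF)
      rw [AdicCompletion.val_zero] at h1
      exact h1
    obtain ⟨hh, hhh⟩ := krull F (fun j => ThetaB_ker_decomp k U₁ U₂ hU₁ hU₂ j F (hz j))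
    rw [hhh]
    exact Ideal.mem_span_singleton.2 ⟨hh, rfl⟩
  · intro hF
    obtain ⟨c, hc⟩ := Ideal.mem_span_singleton.1 hF
    rw [RingHom.mem_ker, hc, map_mul, Theta_gps_zero, zero_mul]

lemma main (h1 : U₁.coeff 0 ≠ 0) (h2 : U₂.coeff 0 ≠ 0) :
    Nonempty ((AdicCompletion (mid k U₁ U₂) (Qr k U₁ U₂)) ≃+*
    (MvPowerSeries (Fin 3) k ⧸ Ideal.span {(gps : MvPowerSeries (Fin 3) k)})) := by
  have e1 := RingHom.quotientKerEquivOfSurjective (Theta_surjective k U₁ U₂ h1 h2)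
  have e0 := Ideal.quotEquivOfEq (Theta_ker k U₁ U₂ h1 h2)
  exact ⟨e1.symm.trans e0⟩

end S11
end
end Stmt14

open MvPolynomial

set_option synthInstance.maxHeartbeats 1000000 in
/-- Over an algebraically closed field `k` of characteristic 2, let
`R₂ = k[X₁,X₂,T]/(T² + X₁X₂T + X₁²P₂(X₂) + X₂²P₁(X₁))` with
`Pᵢ(Xᵢ) = Xᵢ·Uᵢ(Xᵢ)`, `Uᵢ(0) ≠ 0`.  Then the formal completion of `R₂` at the
maximal ideal `(X₁,X₂,T)` is isomorphic to
`k⟦X,Y,T⟧/(T² + XYT + X²Y + XY²)`, a rational double point of type `D₄¹`.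
Here `X₁ = X 0`, `X₂ = X 1`, `T = X 2`. -/
theorem stmt14 (k : Type*) [Field k] [IsAlgClosed k] [CharP k 2]
    (U₁ U₂ : Polynomial k) (hU₁ : U₁.coeff 0 ≠ 0) (hU₂ : U₂.coeff 0 ≠ 0)
    (I : Ideal (MvPolynomial (Fin 3) k))
    (hI : I = Ideal.span
      {(X 2)^2 + X 0 * X 1 * X 2
        + (X 0)^2 * (X 1 * Polynomial.aeval (X 1) U₂)
        + (X 1)^2 * (X 0 * Polynomial.aeval (X 0) U₁)})
    (m : Ideal (MvPolynomial (Fin 3) k ⧸ I))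
    (hm : m = Ideal.span {Ideal.Quotient.mk I (X 0), Ideal.Quotient.mk I (X 1),
      Ideal.Quotient.mk I (X 2)})
    (J : Ideal (MvPowerSeries (Fin 3) k))
    (hJ : J = Ideal.span
      {(MvPowerSeries.X 2)^2
        + MvPowerSeries.X 0 * MvPowerSeries.X 1 * MvPowerSeries.X 2
        + (MvPowerSeries.X 0)^2 * MvPowerSeries.X 1
        + MvPowerSeries.X 0 * (MvPowerSeries.X 1)^2}) :
    Nonempty ((AdicCompletion m (MvPolynomial (Fin 3) k ⧸ I)) ≃+*
      (MvPowerSeries (Fin 3) k ⧸ J)) := by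
  subst hI
  subst hm
  subst hJ
  exact Stmt14.main k U₁ U₂ hU₁ hU₂
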